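/- For the cycle graph C_n on n ≥ 3 vertices, the harmonic index of its total graph satisfies H(T(C_n)) = n. -/

import Mathlib

open scoped Classical

/-- The total graph `T(G)` of a simple graph `G`: its vertex set is `V(G) ∪ E(G)`,
and two vertices of `T(G)` are adjacent iff the corresponding elements of `G`
are adjacent vertices, adjacent (distinct, sharing an endpoint) edges, or an
incident vertex–edge pair. -/
def SimpleGraph.totalGraph {V : Type*} (G : SimpleGraph V) :
    SimpleGraph (V ⊕ G.edgeSet) where
  Adj x y :=
    match x, y with
    | Sum.inl u, Sum.inl v => G.Adj u v
    | Sum.inl u, Sum.inr e => u ∈ (e : Sym2 V)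
    | Sum.inr e, Sum.inl u => u ∈ (e : Sym2 V)
    | Sum.inr e, Sum.inr f => e ≠ f ∧ ∃ v, v ∈ (e : Sym2 V) ∧ v ∈ (f : Sym2 V)
  symm := by
    refine ⟨?_⟩
    rintro (u | e) (v | f) h
    · exact h.symm
    · exact h
    · exact h
    · exact ⟨h.1.symm, h.2.imp fun v hv => ⟨hv.2, hv.1⟩⟩
  loopless := by
    refine ⟨?_⟩
    rintro (u | e) h
    · exact G.loopless.irrefl u h
    · exact h.1 rfl

/-- The harmonic index `H(G) = ∑_{uv ∈ E(G)} 2 / (deg u + deg v)`. -/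
noncomputable def SimpleGraph.harmonicIndex {V : Type*} [Fintype V] (G : SimpleGraph V) : ℝ :=
  ∑ e ∈ G.edgeFinset,
    Sym2.lift ⟨fun u v => 2 / ((G.degree u : ℝ) + (G.degree v : ℝ)),
      fun u v => by simp [add_comm]⟩ e

namespace TotalCycleAux

open SimpleGraph
open Fin.CommRing

@[simp] lemma tg_adj_ll {V : Type*} (G : SimpleGraph V) (u v : V) :
    G.totalGraph.Adj (Sum.inl u) (Sum.inl v) ↔ G.Adj u v := Iff.rfl

@[simp] lemma tg_adj_lr {V : Type*} (G : SimpleGraph V) (u : V) (e : G.edgeSet) :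
    G.totalGraph.Adj (Sum.inl u) (Sum.inr e) ↔ u ∈ (e : Sym2 V) := Iff.rfl

@[simp] lemma tg_adj_rl {V : Type*} (G : SimpleGraph V) (u : V) (e : G.edgeSet) :
    G.totalGraph.Adj (Sum.inr e) (Sum.inl u) ↔ u ∈ (e : Sym2 V) := Iff.rfl

@[simp] lemma tg_adj_rr {V : Type*} (G : SimpleGraph V) (e f : G.edgeSet) :
    G.totalGraph.Adj (Sum.inr e) (Sum.inr f) ↔
      e ≠ f ∧ ∃ v, v ∈ (e : Sym2 V) ∧ v ∈ (f : Sym2 V) := Iff.rfl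

lemma finTwoNe (m : ℕ) : (2 : Fin (m+3)) ≠ 0 := by
  simp [Fin.ext_iff, Fin.val_two]
  rw [Nat.mod_eq_of_lt (by omega)]; omega

lemma finOneNe (m : ℕ) : (1 : Fin (m+3)) ≠ 0 := by
  simp [Fin.ext_iff]

noncomputable def E (m : ℕ) (i : Fin (m+3)) : (cycleGraph (m+3)).edgeSet :=
  ⟨s(i, i+1), by rw [SimpleGraph.mem_edgeSet, cycleGraph_adj]; right; simp⟩

@[simp] lemma E_inj (m : ℕ) (i j : Fin (m+3)) : E m i = E m j ↔ i = j := by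
  constructor
  · intro h
    rw [Subtype.ext_iff] at h
    simp only [E, Sym2.eq, Sym2.rel_iff', Prod.mk.injEq, Prod.swap_prod_mk] at h
    rcases h with ⟨h1, h2⟩ | ⟨h1, h2⟩
    · exact h1
    · exfalso
      apply finTwoNe m
      have h3 : j + 2 = j + 0 := by
        linear_combination h2 - h1
      exact add_left_cancel h3
  · rintro rfl; rfl

lemma E_surj (m : ℕ) (f : (cycleGraph (m+3)).edgeSet) : ∃ i, f = E m i := by
  obtain ⟨e, he⟩ := f
  induction e with
  | _ a b =>
    rw [SimpleGraph.mem_edgeSet, cycleGraph_adj] at he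
    rcases he with h | h
    · refine ⟨b, ?_⟩
      apply Subtype.ext
      have : a = b + 1 := by rw [← h]; ring
      simp [E, this, Sym2.eq_swap]
    · refine ⟨a, ?_⟩
      apply Subtype.ext
      have : b = a + 1 := by rw [← h]; ring
      simp [E, this]

lemma mem_E_iff (m : ℕ) (u : Fin (m+3)) (f : (cycleGraph (m+3)).edgeSet) :
    u ∈ (f : Sym2 (Fin (m+3))) ↔ f = E m (u-1) ∨ f = E m u := by
  obtain ⟨i, rfl⟩ := E_surj m f
  rw [E_inj, E_inj]
  simp only [E, Sym2.mem_iff]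
  constructor
  · rintro (rfl | rfl)
    · right; rfl
    · left; rw [add_sub_cancel_right]
  · rintro (rfl | rfl)
    · right; rw [sub_add_cancel]
    · left; rfl

lemma sub_one_ne_add_one (m : ℕ) (u : Fin (m+3)) : u - 1 ≠ u + 1 := by
  intro h
  apply finTwoNe m
  linear_combination -h

lemma sub_one_ne (m : ℕ) (u : Fin (m+3)) : u - 1 ≠ u := by
  intro h
  apply finOneNe m
  linear_combination -h

lemma ne_add_one (m : ℕ) (u : Fin (m+3)) : u ≠ u + 1 := by
  intro h
  apply finOneNe m
  linear_combination -h

lemma nf_inl (m : ℕ) (u : Fin (m+3)) :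
    (cycleGraph (m+3)).totalGraph.neighborFinset (Sum.inl u) =
      {Sum.inl (u-1), Sum.inl (u+1), Sum.inr (E m (u-1)), Sum.inr (E m u)} := by
  ext x
  rcases x with v | f
  · simp only [SimpleGraph.mem_neighborFinset, tg_adj_ll, cycleGraph_adj,
      Finset.mem_insert, Finset.mem_singleton, Sum.inl.injEq, reduceCtorEq, or_false]
    constructor
    · rintro (h | h)
      · left; linear_combination -h
      · right; linear_combination h
    · rintro (rfl | rfl)
      · left; ring
      · right; ring
  · simp only [SimpleGraph.mem_neighborFinset, tg_adj_lr, mem_E_iff,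
      Finset.mem_insert, Finset.mem_singleton, Sum.inr.injEq, reduceCtorEq, false_or]

lemma nf_inr (m : ℕ) (i : Fin (m+3)) :
    (cycleGraph (m+3)).totalGraph.neighborFinset (Sum.inr (E m i)) =
      {Sum.inl i, Sum.inl (i+1), Sum.inr (E m (i-1)), Sum.inr (E m (i+1))} := by
  ext x
  rcases x with v | f
  · simp only [SimpleGraph.mem_neighborFinset, tg_adj_rl, Finset.mem_insert,
      Finset.mem_singleton, Sum.inl.injEq, reduceCtorEq, or_false]
    simp [E]
  · simp only [SimpleGraph.mem_neighborFinset, tg_adj_rr, Finset.mem_insert,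
      Finset.mem_singleton, Sum.inr.injEq, reduceCtorEq, false_or]
    constructor
    · rintro ⟨hne, v, hv1, hv2⟩
      rw [mem_E_iff] at hv2
      have hv1' : v = i ∨ v = i + 1 := by simpa [E] using hv1
      rcases hv1' with rfl | rfl
      · rcases hv2 with rfl | rfl
        · left; rfl
        · exact absurd rfl hne
      · rcases hv2 with rfl | rfl
        · rw [add_sub_cancel_right] at hne ⊢
          exact absurd rfl hne
        · right; rfl
    · rintro (rfl | rfl)
      · refine ⟨fun h => sub_one_ne m i (E_inj m _ _ |>.mp h.symm), i, ?_, ?_⟩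
        · simp [E]
        · simp [E, sub_add_cancel]
      · refine ⟨fun h => ne_add_one m i (E_inj m _ _ |>.mp h), i+1, ?_, ?_⟩
        · simp [E]
        · simp [E]

lemma degree_total (m : ℕ) (x : Fin (m+3) ⊕ (cycleGraph (m+3)).edgeSet) :
    (cycleGraph (m+3)).totalGraph.degree x = 4 := by
  rcases x with u | e
  · rw [SimpleGraph.degree, nf_inl]
    rw [Finset.card_insert_of_notMem (by simp [sub_one_ne_add_one m u]),
      Finset.card_insert_of_notMem (by simp),
      Finset.card_insert_of_notMem (by simp [sub_one_ne m u]),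
      Finset.card_singleton]
  · obtain ⟨i, rfl⟩ := E_surj m e
    rw [SimpleGraph.degree, nf_inr]
    rw [Finset.card_insert_of_notMem (by simp [ne_add_one m i]),
      Finset.card_insert_of_notMem (by simp),
      Finset.card_insert_of_notMem (by simp [sub_one_ne_add_one m i]),
      Finset.card_singleton]

lemma card_edgeSet_cycle (m : ℕ) :
    Fintype.card (cycleGraph (m+3)).edgeSet = m + 3 := by
  have h := (cycleGraph (m+3)).sum_degrees_eq_twice_card_edges
  rw [Finset.sum_congr rfl (fun v _ => cycleGraph_degree_three_le (v := v))] at h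
  rw [Finset.sum_const, Finset.card_univ, Fintype.card_fin, smul_eq_mul] at h
  rw [SimpleGraph.edgeFinset_card] at h
  omega

end TotalCycleAux

/-- For the cycle graph `C_n` on `n ≥ 3` vertices, `H(T(C_n)) = n`. -/
theorem harmonicIndex_totalGraph_cycleGraph (n : ℕ) (hn : 3 ≤ n) :
    (SimpleGraph.cycleGraph n).totalGraph.harmonicIndex = (n : ℝ) := by
  open TotalCycleAux in
  obtain ⟨m, rfl⟩ : ∃ m, n = m + 3 := ⟨n - 3, by omega⟩
  have hcard : (SimpleGraph.cycleGraph (m+3)).totalGraph.edgeFinset.card = 4 * (m + 3) := by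
    have h := (SimpleGraph.cycleGraph (m+3)).totalGraph.sum_degrees_eq_twice_card_edges
    rw [Finset.sum_congr rfl (fun v _ => degree_total m v)] at h
    rw [Finset.sum_const, Finset.card_univ, Fintype.card_sum, Fintype.card_fin,
      card_edgeSet_cycle, smul_eq_mul] at h
    omega
  rw [SimpleGraph.harmonicIndex]
  have hterm : ∀ e ∈ (SimpleGraph.cycleGraph (m+3)).totalGraph.edgeFinset,
      Sym2.lift ⟨fun u v => 2 / (((SimpleGraph.cycleGraph (m+3)).totalGraph.degree u : ℝ) +
          ((SimpleGraph.cycleGraph (m+3)).totalGraph.degree v : ℝ)),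
        fun u v => by simp [add_comm]⟩ e = 1/4 := by
    intro e _
    induction e using Sym2.ind with
    | _ x y =>
      rw [Sym2.lift_mk]
      simp only [degree_total]
      norm_num
  rw [Finset.sum_congr rfl hterm, Finset.sum_const, hcard, nsmul_eq_mul]
  push_cast
  ring
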